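/- Let φ be a 3CNF instance with variables x_1,…,x_n and clauses c_1,…,c_m, let G(φ) be its Garey–Johnson graph, let W = {v_ℓ : ℓ a literal of φ}, let f map each literal ℓ to v_ℓ, and let k = n + 2m. Then: (i) φ is satisfiable if and only if G(φ) has a vertex cover of size at most k; and (ii) {f(A) : A a satisfying literal set of φ} = {S ∩ W : S a vertex cover of G(φ) with |S| ≤ k}. -/

import Mathlib

/-- A literal over `n` variables: a variable index together with a polarity
(`true` = positive literal `x_i`, `false` = negative literal `¬x_i`). -/
abbrev Lit (n : ℕ) := Fin n × Bool

/-- `A` is a satisfying literal set of the 3CNF instance with clauses `C`: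
it contains exactly one literal per variable and at least one literal of each clause. -/
def SatLitSet {n m : ℕ} (C : Fin m → Finset (Lit n)) (A : Finset (Lit n)) : Prop :=
  (∀ i : Fin n, Xor' ((i, true) ∈ A) ((i, false) ∈ A)) ∧ ∀ j : Fin m, ∃ ℓ ∈ C j, ℓ ∈ A

/-- Clause vertices of the Garey–Johnson graph: a pair of a clause index `j` and a
literal `ℓ ∈ c_j`. -/
abbrev CVert {n m : ℕ} (C : Fin m → Finset (Lit n)) := {p : Fin m × Lit n // p.2 ∈ C p.1}

/-- Vertices of the Garey–Johnson graph: literal vertices `v_ℓ` and clause vertices `v^c_ℓ`. -/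
abbrev GJVert {n m : ℕ} (C : Fin m → Finset (Lit n)) := Lit n ⊕ CVert C

/-- Adjacency of the Garey–Johnson graph: edges `{v_{x_i}, v_{¬x_i}}`, the triangle on
`{v^c_ℓ : ℓ ∈ c}` for every clause `c`, and `{v_ℓ, v^c_ℓ}` for every clause `c`, `ℓ ∈ c`. -/
def gjAdj {n m : ℕ} (C : Fin m → Finset (Lit n)) : GJVert C → GJVert C → Prop := fun u v =>
  (∃ (i : Fin n) (b : Bool), u = Sum.inl (i, b) ∧ v = Sum.inl (i, !b)) ∨
  (∃ x y : CVert C, x.1.1 = y.1.1 ∧ x.1.2 ≠ y.1.2 ∧ u = Sum.inr x ∧ v = Sum.inr y) ∨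
  (∃ x : CVert C, (u = Sum.inl x.1.2 ∧ v = Sum.inr x) ∨ (u = Sum.inr x ∧ v = Sum.inl x.1.2))

/-- the Garey–Johnson reduction from 3SAT to Vertex Cover, with
`W = {v_ℓ : ℓ a literal}`, `f = Sum.inl` and `k = n + 2m`:
(i) `φ` is satisfiable iff `G(φ)` has a vertex cover of size at most `k`, and
(ii) `{f(A) : A satisfying} = {S ∩ W : S a vertex cover of size ≤ k}`. -/
lemma all_eq_of_sum_le {α : Type*} (s : Finset α) (f : α → ℕ) (a : ℕ)
    (h1 : ∀ j ∈ s, a ≤ f j) (h2 : ∑ j ∈ s, f j ≤ s.card * a) : ∀ j ∈ s, f j = a := by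
  intro j hj
  by_contra hne
  have hlt : ∑ _x ∈ s, a < ∑ x ∈ s, f x :=
    Finset.sum_lt_sum h1 ⟨j, hj, lt_of_le_of_ne (h1 j hj) (Ne.symm hne)⟩
  rw [Finset.sum_const, smul_eq_mul] at hlt
  omega

lemma satA_card {n : ℕ} {A : Finset (Lit n)}
    (h : ∀ i : Fin n, Xor' ((i, true) ∈ A) ((i, false) ∈ A)) : A.card = n := by
  have hA : A = Finset.univ.image
      (fun i : Fin n => if (i, true) ∈ A then ((i, true) : Lit n) else (i, false)) := by
    ext ⟨i, b⟩
    simp only [Finset.mem_image, Finset.mem_univ, true_and]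
    constructor
    · intro hb
      refine ⟨i, ?_⟩
      rcases h i with ⟨ht, hf⟩ | ⟨hf, ht⟩
      · rw [if_pos ht]; cases b with
        | true => rfl
        | false => exact absurd hb hf
      · rw [if_neg ht]; cases b with
        | true => exact absurd hb ht
        | false => rfl
    · rintro ⟨a, ha⟩
      by_cases hat : (a, true) ∈ A
      · rw [if_pos hat] at ha; rw [← ha]; exact hat
      · rw [if_neg hat] at ha; rw [← ha]
        rcases h a with ⟨ht, _⟩ | ⟨hf, _⟩
        · exact absurd ht hat
        · exact hf
  rw [hA, Finset.card_image_of_injective _ ?_, Finset.card_univ, Fintype.card_fin]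
  intro a b hab
  have := congrArg Prod.fst hab
  simpa [apply_ite Prod.fst] using this

lemma fiber_card_three {n m : ℕ} (C : Fin m → Finset (Lit n)) (hC : ∀ j, (C j).card = 3)
    (j : Fin m) :
    (Finset.univ.filter (fun x : CVert C => x.1.1 = j)).card = 3 := by
  rw [← hC j]
  apply Finset.card_bij' (fun (x : CVert C) _ => x.1.2)
      (fun ℓ hℓ => (⟨(j, ℓ), hℓ⟩ : CVert C))
  case hi =>
    intro x hx
    simp only [Finset.mem_filter, Finset.mem_univ, true_and] at hx
    rw [← hx]; exact x.2
  case hj =>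
    intro ℓ hℓ; simp
  case left_inv =>
    intro x hx
    simp only [Finset.mem_filter, Finset.mem_univ, true_and] at hx
    apply Subtype.ext
    exact Prod.ext_iff.mpr ⟨hx.symm, rfl⟩
  case right_inv =>
    intro ℓ hℓ; rfl

lemma toCover {n m : ℕ} (C : Fin m → Finset (Lit n)) (hC : ∀ j, (C j).card = 3)
    {A : Finset (Lit n)} (hA : SatLitSet C A) :
    ∃ S : Finset (GJVert C), (∀ u v, gjAdj C u v → u ∈ S ∨ v ∈ S) ∧ S.card ≤ n + 2 * m ∧
      S ∩ (Finset.univ : Finset (Lit n)).image Sum.inl = A.image Sum.inl := by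
  obtain ⟨hx, hsat⟩ := hA
  choose w hw1 hw2 using hsat
  set X : Finset (CVert C) := Finset.univ.filter (fun x : CVert C => x.1.2 ≠ w x.1.1) with hX
  refine ⟨A.image Sum.inl ∪ X.image Sum.inr, ?_, ?_, ?_⟩
  · -- cover
    intro u v hadj
    rcases hadj with ⟨i, b, hu, hv⟩ | ⟨x, y, hxy, hne, hu, hv⟩ | ⟨x, h⟩
    · subst hu; subst hv
      rcases hx i with ⟨ht, hf⟩ | ⟨hf, ht⟩
      · cases b with
        | true => exact Or.inl (Finset.mem_union_left _ (Finset.mem_image_of_mem _ ht))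
        | false => exact Or.inr (Finset.mem_union_left _ (Finset.mem_image_of_mem _ ht))
      · cases b with
        | true => exact Or.inr (Finset.mem_union_left _ (Finset.mem_image_of_mem _ hf))
        | false => exact Or.inl (Finset.mem_union_left _ (Finset.mem_image_of_mem _ hf))
    · subst hu; subst hv
      by_cases hxw : x.1.2 = w x.1.1
      · right
        apply Finset.mem_union_right
        apply Finset.mem_image_of_mem
        simp only [hX, Finset.mem_filter, Finset.mem_univ, true_and]
        rw [← hxy]
        intro hyw
        exact hne (hxw.trans hyw.symm)
      · left
        apply Finset.mem_union_right
        apply Finset.mem_image_of_mem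
        simp only [hX, Finset.mem_filter, Finset.mem_univ, true_and]
        exact hxw
    · by_cases hxw : x.1.2 = w x.1.1
      · have hmem : Sum.inl x.1.2 ∈ A.image Sum.inl ∪ X.image Sum.inr := by
          apply Finset.mem_union_left
          apply Finset.mem_image_of_mem
          rw [hxw]; exact hw2 x.1.1
        rcases h with ⟨hu, hv⟩ | ⟨hu, hv⟩
        · exact Or.inl (hu ▸ hmem)
        · exact Or.inr (hv ▸ hmem)
      · have hmem : Sum.inr x ∈ A.image Sum.inl ∪ X.image Sum.inr := by
          apply Finset.mem_union_right
          apply Finset.mem_image_of_mem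
          simp only [hX, Finset.mem_filter, Finset.mem_univ, true_and]
          exact hxw
        rcases h with ⟨hu, hv⟩ | ⟨hu, hv⟩
        · exact Or.inr (hv ▸ hmem)
        · exact Or.inl (hu ▸ hmem)
  · -- cardinality
    refine le_trans (Finset.card_union_le _ _) ?_
    have h1 : (A.image (Sum.inl : Lit n → GJVert C)).card = n := by
      rw [Finset.card_image_of_injective _ Sum.inl_injective, satA_card hx]
    have h2 : (X.image (Sum.inr : CVert C → GJVert C)).card ≤ 2 * m := by
      rw [Finset.card_image_of_injective _ Sum.inr_injective]
      have := Finset.card_eq_sum_card_fiberwise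
        (f := fun x : CVert C => x.1.1) (s := X) (t := Finset.univ)
        (fun x _ => Finset.mem_univ _)
      rw [this]
      calc ∑ j ∈ Finset.univ, (X.filter (fun x : CVert C => x.1.1 = j)).card
          ≤ ∑ _j ∈ (Finset.univ : Finset (Fin m)), 2 := by
            apply Finset.sum_le_sum
            intro j _
            have hsub : X.filter (fun x : CVert C => x.1.1 = j) ⊆
                (Finset.univ.filter (fun x : CVert C => x.1.1 = j)).erase ⟨(j, w j), hw1 j⟩ := by
              intro x hxm
              simp only [hX, Finset.mem_filter, Finset.mem_univ, true_and] at hxm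
              rw [Finset.mem_erase]
              refine ⟨?_, by simp [hxm.2]⟩
              intro heq
              apply hxm.1
              rw [heq]
            refine le_trans (Finset.card_le_card hsub) ?_
            rw [Finset.card_erase_of_mem (by simp), fiber_card_three C hC j]
        _ = 2 * m := by simp [Finset.sum_const, mul_comm]
    omega
  · -- intersection
    ext u
    simp only [Finset.mem_inter, Finset.mem_union, Finset.mem_image, Finset.mem_univ, true_and]
    constructor
    · rintro ⟨hl | hr, ℓ, hℓ⟩
      · exact hl
      · exfalso
        obtain ⟨x, _, hxu⟩ := hr
        rw [← hℓ] at hxu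
        cases hxu
    · intro hmem
      obtain ⟨ℓ, hℓA, hℓu⟩ := hmem
      exact ⟨Or.inl ⟨ℓ, hℓA, hℓu⟩, ℓ, hℓu⟩

lemma toSat {n m : ℕ} (C : Fin m → Finset (Lit n)) (hC : ∀ j, (C j).card = 3)
    {S : Finset (GJVert C)} (hcov : ∀ u v, gjAdj C u v → u ∈ S ∨ v ∈ S)
    (hcard : S.card ≤ n + 2 * m) :
    ∃ A : Finset (Lit n), SatLitSet C A ∧
      S ∩ (Finset.univ : Finset (Lit n)).image Sum.inl = A.image Sum.inl := by
  set A : Finset (Lit n) := Finset.univ.filter (fun ℓ => Sum.inl ℓ ∈ S) with hAdef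
  set B : Finset (CVert C) := Finset.univ.filter (fun x => Sum.inr x ∈ S) with hBdef
  have hmemA : ∀ ℓ : Lit n, ℓ ∈ A ↔ Sum.inl ℓ ∈ S := by
    intro ℓ; simp [hAdef]
  have hmemB : ∀ x : CVert C, x ∈ B ↔ Sum.inr x ∈ S := by
    intro x; simp [hBdef]
  -- at least one literal per variable
  have hvar : ∀ i : Fin n, (i, true) ∈ A ∨ (i, false) ∈ A := by
    intro i
    have hadj : gjAdj C (Sum.inl (i, true)) (Sum.inl (i, false)) :=
      Or.inl ⟨i, true, rfl, rfl⟩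
    rcases hcov _ _ hadj with h | h
    · exact Or.inl ((hmemA _).mpr h)
    · exact Or.inr ((hmemA _).mpr h)
  -- total cardinality split
  have hAB : A.card + B.card ≤ S.card := by
    have hsub : A.image Sum.inl ∪ B.image Sum.inr ⊆ S := by
      intro u hu
      rcases Finset.mem_union.mp hu with h | h
      · obtain ⟨ℓ, hℓ, rfl⟩ := Finset.mem_image.mp h
        exact (hmemA _).mp hℓ
      · obtain ⟨x, hxm, rfl⟩ := Finset.mem_image.mp h
        exact (hmemB _).mp hxm
    have hdisj : Disjoint (A.image (Sum.inl : Lit n → GJVert C))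
        (B.image (Sum.inr : CVert C → GJVert C)) := by
      rw [Finset.disjoint_left]
      rintro u hu1 hu2
      obtain ⟨ℓ, _, rfl⟩ := Finset.mem_image.mp hu1
      obtain ⟨x, _, hx⟩ := Finset.mem_image.mp hu2
      cases hx
    calc A.card + B.card
        = (A.image Sum.inl ∪ B.image Sum.inr).card := by
          rw [Finset.card_union_of_disjoint hdisj,
            Finset.card_image_of_injective _ Sum.inl_injective,
            Finset.card_image_of_injective _ Sum.inr_injective]
      _ ≤ S.card := Finset.card_le_card hsub
  -- fiber decompositions
  have hAfib : A.card = ∑ i ∈ Finset.univ, (A.filter (fun ℓ : Lit n => ℓ.1 = i)).card :=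
    Finset.card_eq_sum_card_fiberwise (fun ℓ _ => Finset.mem_univ ℓ.1)
  have hBfib : B.card = ∑ j ∈ Finset.univ, (B.filter (fun x : CVert C => x.1.1 = j)).card :=
    Finset.card_eq_sum_card_fiberwise (fun x _ => Finset.mem_univ x.1.1)
  have hAfib1 : ∀ i : Fin n, 1 ≤ (A.filter (fun ℓ : Lit n => ℓ.1 = i)).card := by
    intro i
    rw [Nat.one_le_iff_ne_zero, Ne, Finset.card_eq_zero, ← Ne, ← Finset.nonempty_iff_ne_empty]
    rcases hvar i with h | h
    · exact ⟨(i, true), Finset.mem_filter.mpr ⟨h, rfl⟩⟩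
    · exact ⟨(i, false), Finset.mem_filter.mpr ⟨h, rfl⟩⟩
  have hBsub : ∀ j : Fin m, B.filter (fun x : CVert C => x.1.1 = j) ⊆
      Finset.univ.filter (fun x : CVert C => x.1.1 = j) := by
    intro j x hxm
    simp only [Finset.mem_filter] at hxm ⊢
    exact ⟨Finset.mem_univ _, hxm.2⟩
  have hDj : ∀ j : Fin m,
      ((Finset.univ.filter (fun x : CVert C => x.1.1 = j)) \
        (B.filter (fun x : CVert C => x.1.1 = j))).card ≤ 1 := by
    intro j
    apply Finset.card_le_one.mpr
    intro x hxm y hym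
    by_contra hne
    simp only [Finset.mem_sdiff, Finset.mem_filter, Finset.mem_univ, true_and, hBdef,
      not_and] at hxm hym
    have hx2 : x.1.2 ≠ y.1.2 := by
      intro h2
      apply hne
      apply Subtype.ext
      exact Prod.ext_iff.mpr ⟨hxm.1.trans hym.1.symm, h2⟩
    have hadj : gjAdj C (Sum.inr x) (Sum.inr y) :=
      Or.inr (Or.inl ⟨x, y, hxm.1.trans hym.1.symm, hx2, rfl, rfl⟩)
    rcases hcov _ _ hadj with h | h
    · exact hxm.2 h hxm.1
    · exact hym.2 h hym.1
  have hBfib2 : ∀ j : Fin m, 2 ≤ (B.filter (fun x : CVert C => x.1.1 = j)).card := by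
    intro j
    have h3 := fiber_card_three C hC j
    have h4 := Finset.card_sdiff_add_card_eq_card (hBsub j)
    have h5 := hDj j
    omega
  have hAn : n ≤ A.card := by
    rw [hAfib]
    calc n = ∑ _i ∈ (Finset.univ : Finset (Fin n)), 1 := by simp
      _ ≤ _ := Finset.sum_le_sum (fun i _ => hAfib1 i)
  have hBm : 2 * m ≤ B.card := by
    rw [hBfib]
    calc 2 * m = ∑ _j ∈ (Finset.univ : Finset (Fin m)), 2 := by simp [mul_comm]
      _ ≤ _ := Finset.sum_le_sum (fun j _ => hBfib2 j)
  have hAcard : A.card = n := by omega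
  have hBcard : B.card = 2 * m := by omega
  have hAfe : ∀ i ∈ (Finset.univ : Finset (Fin n)),
      (A.filter (fun ℓ : Lit n => ℓ.1 = i)).card = 1 := by
    apply all_eq_of_sum_le
    · exact fun i _ => hAfib1 i
    · rw [← hAfib, hAcard]; simp
  have hBfe : ∀ j ∈ (Finset.univ : Finset (Fin m)),
      (B.filter (fun x : CVert C => x.1.1 = j)).card = 2 := by
    apply all_eq_of_sum_le
    · exact fun j _ => hBfib2 j
    · rw [← hBfib, hBcard]; simp [mul_comm]
  have hxor : ∀ i : Fin n, Xor' ((i, true) ∈ A) ((i, false) ∈ A) := by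
    intro i
    have hone := hAfe i (Finset.mem_univ i)
    have hpair : ¬((i, true) ∈ A ∧ (i, false) ∈ A) := by
      rintro ⟨ht, hf⟩
      have hsub2 : ({((i, true) : Lit n), (i, false)} : Finset (Lit n)) ⊆
          A.filter (fun ℓ : Lit n => ℓ.1 = i) := by
        intro ℓ hℓ
        rcases Finset.mem_insert.mp hℓ with rfl | hℓ
        · exact Finset.mem_filter.mpr ⟨ht, rfl⟩
        · rw [Finset.mem_singleton] at hℓ
          subst hℓ
          exact Finset.mem_filter.mpr ⟨hf, rfl⟩
      have := Finset.card_le_card hsub2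
      rw [Finset.card_pair (by simp)] at this
      omega
    rcases hvar i with h | h
    · exact Or.inl ⟨h, fun hf => hpair ⟨h, hf⟩⟩
    · exact Or.inr ⟨h, fun ht => hpair ⟨ht, h⟩⟩
  have hclause : ∀ j : Fin m, ∃ ℓ ∈ C j, ℓ ∈ A := by
    intro j
    have h2 := hBfe j (Finset.mem_univ j)
    have h3 := fiber_card_three C hC j
    have h4 := Finset.card_sdiff_add_card_eq_card (hBsub j)
    have h5 : ((Finset.univ.filter (fun x : CVert C => x.1.1 = j)) \
        (B.filter (fun x : CVert C => x.1.1 = j))).Nonempty := by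
      rw [← Finset.card_pos]
      omega
    obtain ⟨x, hx⟩ := h5
    simp only [Finset.mem_sdiff, Finset.mem_filter, Finset.mem_univ, true_and, hBdef,
      not_and] at hx
    have hxS : Sum.inr x ∉ S := fun h => hx.2 h hx.1
    have hadj : gjAdj C (Sum.inl x.1.2) (Sum.inr x) :=
      Or.inr (Or.inr ⟨x, Or.inl ⟨rfl, rfl⟩⟩)
    rcases hcov _ _ hadj with h | h
    · refine ⟨x.1.2, ?_, (hmemA _).mpr h⟩
      have hx2 := x.2
      rwa [hx.1] at hx2
    · exact absurd h hxS
  refine ⟨A, ⟨hxor, hclause⟩, ?_⟩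
  ext u
  simp only [Finset.mem_inter, Finset.mem_image, Finset.mem_univ, true_and]
  constructor
  · rintro ⟨hS, ℓ, rfl⟩
    exact ⟨ℓ, (hmemA ℓ).mpr hS, rfl⟩
  · rintro ⟨ℓ, hℓ, rfl⟩
    exact ⟨(hmemA ℓ).mp hℓ, ℓ, rfl⟩

theorem stmt_2 {n m : ℕ} (C : Fin m → Finset (Lit n)) (hC : ∀ j, (C j).card = 3)
    (G : SimpleGraph (GJVert C)) (hG : ∀ u v, G.Adj u v ↔ gjAdj C u v) :
    ((∃ A, SatLitSet C A) ↔
      (∃ S : Finset (GJVert C), S.card ≤ n + 2 * m ∧ ∀ u v, G.Adj u v → u ∈ S ∨ v ∈ S)) ∧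
    {T : Finset (GJVert C) | ∃ A, SatLitSet C A ∧ T = A.image (Sum.inl : Lit n → GJVert C)}
      = {T : Finset (GJVert C) | ∃ S : Finset (GJVert C),
          (∀ u v, G.Adj u v → u ∈ S ∨ v ∈ S) ∧ S.card ≤ n + 2 * m ∧
          T = S ∩ (Finset.univ : Finset (Lit n)).image (Sum.inl : Lit n → GJVert C)} := by
  have hcov_iff : ∀ S : Finset (GJVert C),
      (∀ u v, G.Adj u v → u ∈ S ∨ v ∈ S) ↔ (∀ u v, gjAdj C u v → u ∈ S ∨ v ∈ S) := by
    intro S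
    constructor <;> intro h u v hadj
    · exact h u v ((hG u v).mpr hadj)
    · exact h u v ((hG u v).mp hadj)
  constructor
  · constructor
    · rintro ⟨A, hA⟩
      obtain ⟨S, hc, hcard, -⟩ := toCover C hC hA
      exact ⟨S, hcard, (hcov_iff S).mpr hc⟩
    · rintro ⟨S, hcard, hc⟩
      obtain ⟨A, hA, -⟩ := toSat C hC ((hcov_iff S).mp hc) hcard
      exact ⟨A, hA⟩
  · ext T
    simp only [Set.mem_setOf_eq]
    constructor
    · rintro ⟨A, hA, rfl⟩
      obtain ⟨S, hc, hcard, hint⟩ := toCover C hC hA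
      exact ⟨S, (hcov_iff S).mpr hc, hcard, hint.symm⟩
    · rintro ⟨S, hc, hcard, rfl⟩
      obtain ⟨A, hA, hint⟩ := toSat C hC ((hcov_iff S).mp hc) hcard
      exact ⟨A, hA, hint⟩
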